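/- Let K be a field, ε ∈ {1, -1}, and a, c ∈ K. Suppose g is a Lie superalgebra over K graded by an abelian group, with elements e⁺, e⁻, h and a family of nonzero vectors v_0, v_1, …, v_B (B ∈ ℕ) such that: [h, v_m] = (a + m·c)·v_m for all m; [e⁺, v_m] = c⁺_m·v_{m+1} with c⁺_m ≠ 0 for m < B; [e⁻, v_{m+1}] = c⁻_m·v_m with c⁻_m ≠ 0 for m < B; [e⁺, [e⁻, v_0]] = 0; [e⁻, [e⁺, v_B]] = 0; and [h, x] = [e⁺, [e⁻, x]] - ε·[e⁻, [e⁺, x]] for x among the v_m. Define d : ℤ → K by d_{-1} = 0 and d_m = ε·(d_{m-1} - a - m·c). Then c⁺_m·c⁻_m = d_m for all 0 ≤ m < B, and d_B = 0, while d_m ≠ 0 for 0 ≤ m < B. -/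
import Mathlib


/-- Abstract setting for a root string in a graded Lie superalgebra: a `K`-module `V`
with a bilinear bracket, Chevalley elements `e⁺, e⁻, h`, and a string of nonzero
vectors `v 0, …, v B`. -/
theorem stmt_17 (K : Type*) [Field K] (ε a c : K) (hε : ε = 1 ∨ ε = -1)
    (V : Type*) [AddCommGroup V] [Module K V]
    (brkt : V →ₗ[K] V →ₗ[K] V)
    (ep em h : V) (B : ℕ) (v : ℕ → V) (cp cm : ℕ → K)
    (hv : ∀ m : ℕ, m ≤ B → v m ≠ 0)
    (hh : ∀ m : ℕ, m ≤ B → brkt h (v m) = (a + m • c) • v m)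
    (hep : ∀ m : ℕ, m < B → brkt ep (v m) = cp m • v (m + 1))
    (hcp : ∀ m : ℕ, m < B → cp m ≠ 0)
    (hem : ∀ m : ℕ, m < B → brkt em (v (m + 1)) = cm m • v m)
    (hcm : ∀ m : ℕ, m < B → cm m ≠ 0)
    (hbot : brkt ep (brkt em (v 0)) = 0)
    (htop : brkt em (brkt ep (v B)) = 0)
    (hjacobi : ∀ m : ℕ, m ≤ B →
      brkt h (v m) = brkt ep (brkt em (v m)) - ε • brkt em (brkt ep (v m)))
    (d : ℤ → K)
    (hdm1 : d (-1) = 0)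
    (hds : ∀ m : ℤ, 0 ≤ m → d m = ε * (d (m - 1) - a - (m : K) * c)) :
    (∀ m : ℕ, m < B → cp m * cm m = d m) ∧ d B = 0 ∧
      ∀ m : ℕ, m < B → d m ≠ 0 := by
  have hε2 : ε * ε = 1 := by rcases hε with h' | h' <;> simp [h']
  have hscal : ∀ (x : K) (m : ℕ), m ≤ B → x • v m = 0 → x = 0 := by
    intro x m hm hx
    rcases smul_eq_zero.mp hx with h' | h'
    · exact h'
    · exact absurd h' (hv m hm)
  have main : ∀ m : ℕ, m < B → cp m * cm m = d m := by
    intro m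
    induction m with
    | zero =>
      intro hm0
      have hj := hjacobi 0 (le_of_lt hm0)
      rw [hh 0 (le_of_lt hm0), hbot, hep 0 hm0, map_smul, hem 0 hm0] at hj
      have key : (a + (0:ℕ) • c + ε * (cp 0 * cm 0)) • v 0 = 0 := by
        have h2 : (ε * (cp 0 * cm 0)) • v 0 = ε • cp 0 • cm 0 • v 0 := by
          simp [smul_smul, mul_assoc]
        rw [add_smul, h2, hj]
        abel
      have h0 := hscal _ 0 (le_of_lt hm0) key
      simp only [zero_smul, add_zero] at h0
      have hd0 := hds 0 (by norm_num)
      simp only [Int.cast_zero, zero_mul, sub_zero] at hd0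
      rw [show (0:ℤ) - 1 = -1 by ring, hdm1] at hd0
      rw [Nat.cast_zero, hd0]
      linear_combination ε * h0 - (cp 0 * cm 0) * hε2
    | succ k ih =>
      intro hm
      have hkB : k < B := Nat.lt_of_succ_lt hm
      have hkd := ih hkB
      have hj := hjacobi (k+1) (le_of_lt hm)
      rw [hh (k+1) (le_of_lt hm), hem k hkB, map_smul, hep k hkB,
        hep (k+1) hm, map_smul, hem (k+1) hm] at hj
      have key : (a + (k+1:ℕ) • c - cm k * cp k + ε * (cp (k+1) * cm (k+1))) • v (k+1) = 0 := by
        have h1 : (cm k * cp k) • v (k+1) = cm k • cp k • v (k+1) := by rw [smul_smul]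
        have h2 : (ε * (cp (k+1) * cm (k+1))) • v (k+1)
            = ε • cp (k+1) • cm (k+1) • v (k+1) := by
          simp [smul_smul, mul_assoc]
        rw [add_smul, sub_smul, h1, h2, hj]
        abel
      have h0 := hscal _ (k+1) (le_of_lt hm) key
      have hd := hds (k+1 : ℕ) (by positivity)
      have hcast : ((k+1 : ℕ) : ℤ) - 1 = (k : ℤ) := by push_cast; ring
      rw [hcast, ← hkd] at hd
      have hsm : ((k+1:ℕ) • c) = ((k:K) + 1) * c := by
        rw [nsmul_eq_mul]; push_cast; ring
      rw [hsm] at h0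
      have hcast2 : (((k+1:ℕ) : ℤ) : K) = (k : K) + 1 := by push_cast; ring
      rw [hcast2] at hd
      rw [hd]
      linear_combination ε * h0 - (cp (k+1) * cm (k+1)) * hε2
  refine ⟨main, ?_, ?_⟩
  · have hj := hjacobi B le_rfl
    rw [hh B le_rfl, htop, smul_zero, sub_zero] at hj
    have hdB := hds (B : ℕ) (by positivity)
    rcases Nat.eq_zero_or_pos B with hB0 | hBpos
    · subst hB0
      rw [hbot] at hj
      have h0 := hscal _ 0 le_rfl hj
      simp only [zero_smul, add_zero] at h0
      simp only [Nat.cast_zero, Int.cast_zero, zero_mul, sub_zero] at hdB ⊢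
      rw [show (0:ℤ) - 1 = -1 by ring, hdm1, h0] at hdB
      rw [hdB]; ring
    · obtain ⟨k, rfl⟩ : ∃ k, B = k + 1 := ⟨B - 1, (Nat.succ_pred_eq_of_pos hBpos).symm⟩
      have hkB : k < k + 1 := Nat.lt_succ_self k
      rw [hem k hkB, map_smul, hep k hkB] at hj
      have key : (a + (k+1:ℕ) • c - cm k * cp k) • v (k+1) = 0 := by
        have h1 : (cm k * cp k) • v (k+1) = cm k • cp k • v (k+1) := by rw [smul_smul]
        rw [sub_smul, h1, hj]
        abel
      have h0 := hscal _ (k+1) le_rfl key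
      have hcast : ((k+1 : ℕ) : ℤ) - 1 = (k : ℤ) := by push_cast; ring
      rw [hcast, ← main k hkB] at hdB
      have hsm : ((k+1:ℕ) • c) = ((k:K) + 1) * c := by rw [nsmul_eq_mul]; push_cast; ring
      rw [hsm] at h0
      have hcast2 : (((k+1:ℕ) : ℤ) : K) = (k : K) + 1 := by push_cast; ring
      rw [hcast2] at hdB
      rw [hdB]
      have hz : cp k * cm k - a - ((k:K)+1) * c = 0 := by linear_combination -h0
      rw [hz]; ring
  · intro m hm
    rw [← main m hm]
    exact mul_ne_zero (hcp m hm) (hcm m hm)
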